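/- Fix α ∈ (0,1/2), γ ∈ (0,α) and ω ∈ (0,1). Then P(Z1 > min{z_{1−α+γ}, Z̃2}) > α and P(Z1 > min{z_{1−α+γ}, Z̃2 + z_{1−γ}}) < α. -/

import Mathlib

open MeasureTheory ProbabilityTheory Real

/-- The standard normal distribution on `ℝ`. -/
noncomputable def stdNormal : Measure ℝ := gaussianReal 0 1

/-- The product of two independent standard normals on `ℝ × ℝ`. -/
noncomputable def stdNormal2 : Measure (ℝ × ℝ) := stdNormal.prod stdNormal

/-- For `ω ∈ [0,1)`, the pair `(Z₁, Z̃₂)` with `Z₁ p = p.1` and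
`Z̃₂ p = ω * p.1 + √(ω - ω²) * p.2` is, under `stdNormal2`, a centered bivariate Gaussian
vector with covariance matrix `[[1, ω], [ω, ω]]`. -/
noncomputable def Ztilde2 (ω : ℝ) (p : ℝ × ℝ) : ℝ := ω * p.1 + Real.sqrt (ω - ω ^ 2) * p.2

/- ### Auxiliary material: rotation invariance of the 2D standard Gaussian -/

noncomputable def rotL (a b : ℝ) : (ℝ × ℝ) →ₗ[ℝ] (ℝ × ℝ) where
  toFun p := (a * p.1 + b * p.2, -b * p.1 + a * p.2)
  map_add' p q := by simp; constructor <;> ring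
  map_smul' c p := by simp; constructor <;> ring

lemma rotL_det (a b : ℝ) : LinearMap.det (rotL a b) = a ^ 2 + b ^ 2 := by
  rw [← LinearMap.det_toMatrix (Module.Basis.finTwoProd ℝ), Matrix.det_fin_two]
  simp [LinearMap.toMatrix_apply, Module.Basis.finTwoProd, rotL]
  ring

lemma rot_volume (a b : ℝ) (hab : a ^ 2 + b ^ 2 = 1) :
    Measure.map (rotL a b) (volume : Measure (ℝ × ℝ)) = volume := by
  rw [Measure.map_linearMap_addHaar_eq_smul_addHaar _ (by rw [rotL_det, hab]; norm_num)]
  rw [rotL_det, hab]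
  norm_num

noncomputable def rotE (a b : ℝ) (hab : a ^ 2 + b ^ 2 = 1) : (ℝ × ℝ) ≃ᵐ (ℝ × ℝ) where
  toFun p := (a * p.1 + b * p.2, -b * p.1 + a * p.2)
  invFun p := (a * p.1 - b * p.2, b * p.1 + a * p.2)
  left_inv p := by
    have h1 : a * (a * p.1 + b * p.2) - b * (-b * p.1 + a * p.2) = p.1 := by
      linear_combination p.1 * hab
    have h2 : b * (a * p.1 + b * p.2) + a * (-b * p.1 + a * p.2) = p.2 := by
      linear_combination p.2 * hab
    simp only; rw [h1, h2]
  right_inv p := by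
    have h1 : a * (a * p.1 - b * p.2) + b * (b * p.1 + a * p.2) = p.1 := by
      linear_combination p.1 * hab
    have h2 : -b * (a * p.1 - b * p.2) + a * (b * p.1 + a * p.2) = p.2 := by
      linear_combination p.2 * hab
    simp only; rw [h1, h2]
  measurable_toFun := by measurability
  measurable_invFun := by measurability

lemma map_withDensity_equiv {α : Type*} [MeasurableSpace α] (μ : Measure α)
    (e : α ≃ᵐ α) (g : α → ENNReal) (hg : Measurable g) :
    (μ.withDensity (g ∘ e)).map e = (μ.map e).withDensity g := by
  ext s hs
  rw [Measure.map_apply e.measurable hs, withDensity_apply _ (e.measurable hs),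
    withDensity_apply _ hs, setLIntegral_map hs hg e.measurable]
  rfl

lemma gaussPDF_prod_eq {u v x y : ℝ} (h : u ^ 2 + v ^ 2 = x ^ 2 + y ^ 2) :
    gaussianPDF 0 1 u * gaussianPDF 0 1 v = gaussianPDF 0 1 x * gaussianPDF 0 1 y := by
  unfold gaussianPDF gaussianPDFReal
  rw [← ENNReal.ofReal_mul (by positivity), ← ENNReal.ofReal_mul (by positivity)]
  congr 1
  simp only [sub_zero, NNReal.coe_one, mul_one]
  rw [mul_mul_mul_comm, ← Real.exp_add, mul_mul_mul_comm, ← Real.exp_add]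
  congr 2
  linarith

noncomputable def gPdf2 : ℝ × ℝ → ENNReal := fun p => gaussianPDF 0 1 p.1 * gaussianPDF 0 1 p.2

lemma gPdf2_meas : Measurable gPdf2 :=
  ((measurable_gaussianPDF 0 1).comp measurable_fst).mul
    ((measurable_gaussianPDF 0 1).comp measurable_snd)

instance : IsProbabilityMeasure stdNormal := by unfold stdNormal; infer_instance
instance : IsProbabilityMeasure stdNormal2 := by unfold stdNormal2; infer_instance

lemma stdNormal_eq : stdNormal = volume.withDensity (gaussianPDF 0 1) :=
  gaussianReal_of_var_ne_zero 0 one_ne_zero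

lemma stdNormal2_eq : stdNormal2 = (volume : Measure (ℝ × ℝ)).withDensity gPdf2 := by
  have hsf : SigmaFinite (volume.withDensity (gaussianPDF 0 1)) := by
    rw [← stdNormal_eq]; infer_instance
  rw [stdNormal2, stdNormal_eq]
  refine Measure.prod_eq fun s t hs ht => ?_
  rw [withDensity_apply _ (hs.prod ht), Measure.volume_eq_prod ℝ ℝ,
    ← Measure.prod_restrict, lintegral_prod _ gPdf2_meas.aemeasurable]
  simp only [gPdf2]
  rw [withDensity_apply _ hs, withDensity_apply _ ht]
  calc ∫⁻ x, (∫⁻ y, gaussianPDF 0 1 x * gaussianPDF 0 1 y ∂volume.restrict t) ∂volume.restrict s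
      = ∫⁻ x, gaussianPDF 0 1 x * (∫⁻ y, gaussianPDF 0 1 y ∂volume.restrict t) ∂volume.restrict s := by
        refine lintegral_congr fun x => ?_
        rw [lintegral_const_mul _ (measurable_gaussianPDF 0 1)]
    _ = _ := by rw [lintegral_mul_const _ (measurable_gaussianPDF 0 1)]

lemma stdNormal2_rot (a b : ℝ) (hab : a ^ 2 + b ^ 2 = 1) :
    stdNormal2.map (rotE a b hab) = stdNormal2 := by
  have hcomp : gPdf2 ∘ (rotE a b hab) = gPdf2 := by
    funext p
    exact gaussPDF_prod_eq (by simp only [rotE, MeasurableEquiv.coe_mk, Equiv.coe_fn_mk]; nlinarith)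
  have hvol : Measure.map (rotE a b hab) (volume : Measure (ℝ × ℝ)) = volume := by
    have := rot_volume a b hab
    convert this using 2
    rfl
  rw [stdNormal2_eq]
  calc (volume.withDensity gPdf2).map (rotE a b hab)
      = (volume.withDensity (gPdf2 ∘ (rotE a b hab))).map (rotE a b hab) := by rw [hcomp]
    _ = ((volume : Measure (ℝ × ℝ)).map (rotE a b hab)).withDensity gPdf2 :=
        map_withDensity_equiv _ _ _ gPdf2_meas
    _ = volume.withDensity gPdf2 := by rw [hvol]

lemma stdNormal2_map_lin (a b : ℝ) (hab : a ^ 2 + b ^ 2 = 1) :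
    stdNormal2.map (fun p : ℝ × ℝ => a * p.1 + b * p.2) = stdNormal := by
  have h1 : (fun p : ℝ × ℝ => a * p.1 + b * p.2) = Prod.fst ∘ (rotE a b hab) := rfl
  rw [h1, ← Measure.map_map measurable_fst (rotE a b hab).measurable, stdNormal2_rot,
    stdNormal2, Measure.map_fst_prod]
  simp

/- ### One-dimensional facts about the standard normal -/

lemma stdNormal_singleton (x : ℝ) : stdNormal {x} = 0 := by
  rw [stdNormal_eq, withDensity_apply _ (measurableSet_singleton x)]
  exact setLIntegral_measure_zero _ _ (Real.volume_singleton)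

lemma stdNormal_neg : stdNormal.map (fun x : ℝ => -x) = stdNormal := by
  have := gaussianReal_map_const_mul (μ := 0) (v := 1) (-1)
  simp only [neg_one_mul, mul_zero, neg_zero] at this
  rw [stdNormal, this]
  congr 1
  ext
  norm_num

lemma stdNormal_Iic_zero : stdNormal (Set.Iic (0:ℝ)) = 1/2 := by
  have hmap : stdNormal (Set.Iic (0:ℝ)) = stdNormal (Set.Ici (0:ℝ)) := by
    conv_lhs => rw [← stdNormal_neg]
    rw [Measure.map_apply measurable_neg measurableSet_Iic]
    congr 1
    ext x
    simp
  have hIci : stdNormal (Set.Ici (0:ℝ)) = stdNormal (Set.Ioi (0:ℝ)) := by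
    refine le_antisymm ?_ (measure_mono Set.Ioi_subset_Ici_self)
    calc stdNormal (Set.Ici (0:ℝ)) ≤ stdNormal ({0} ∪ Set.Ioi 0) := by
          refine measure_mono ?_
          intro x hx
          rcases eq_or_lt_of_le (Set.mem_Ici.mp hx) with h | h
          · exact Or.inl (by simp [← h])
          · exact Or.inr h
      _ ≤ stdNormal {0} + stdNormal (Set.Ioi 0) := measure_union_le _ _
      _ = stdNormal (Set.Ioi 0) := by rw [stdNormal_singleton, zero_add]
  have hcompl : stdNormal (Set.Iic (0:ℝ)) + stdNormal (Set.Ioi (0:ℝ)) = 1 := by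
    rw [← measure_union (by simp [Set.disjoint_left]) measurableSet_Ioi]
    simp [Set.Iic_union_Ioi]
  rw [hmap, hIci] at hcompl ⊢
  rw [ENNReal.eq_div_iff (by norm_num) (by norm_num), two_mul, hcompl]

lemma stdNormal_Ioi_zero : stdNormal (Set.Ioi (0:ℝ)) = 1/2 := by
  have h := measure_compl (μ := stdNormal) (s := Set.Iic (0:ℝ)) measurableSet_Iic
    (measure_ne_top _ _)
  rw [Set.compl_Iic, stdNormal_Iic_zero, measure_univ] at h
  rw [h]
  exact ENNReal.sub_half ENNReal.one_ne_top

lemma stdNormal_Ioc_pos {u v : ℝ} (huv : u < v) : 0 < stdNormal (Set.Ioc u v) := by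
  refine lt_of_lt_of_le ?_ (measure_mono Set.Ioo_subset_Ioc_self)
  rw [pos_iff_ne_zero]
  intro h0
  rw [stdNormal_eq, withDensity_apply _ measurableSet_Ioo,
    lintegral_eq_zero_iff (measurable_gaussianPDF 0 1)] at h0
  rw [Filter.EventuallyEq, ae_iff] at h0
  simp only [Pi.zero_apply] at h0
  have huniv : {x : ℝ | ¬ gaussianPDF 0 1 x = 0} = Set.univ := by
    refine Set.eq_univ_of_forall fun x => ?_
    simp only [Set.mem_setOf_eq]
    exact fun h => absurd h (ne_of_gt (gaussianPDF_pos 0 one_ne_zero x))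
  rw [huniv, Measure.restrict_apply_univ, Real.volume_Ioo] at h0
  rw [ENNReal.ofReal_eq_zero] at h0
  linarith

lemma stdNormal_Ioi_eq {z : ℝ} {r : ℝ} (hr0 : 0 ≤ r) (hr1 : r ≤ 1)
    (hz : stdNormal (Set.Iic z) = ENNReal.ofReal r) :
    stdNormal (Set.Ioi z) = ENNReal.ofReal (1 - r) := by
  have h := measure_compl (μ := stdNormal) (s := Set.Iic z) measurableSet_Iic (measure_ne_top _ _)
  rw [Set.compl_Iic, hz, measure_univ] at h
  rw [h, ← ENNReal.ofReal_one, ← ENNReal.ofReal_sub _ hr0]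

/- ### Main theorem -/

/-- `P(Z₁ > min{z_{1-α+γ}, Z̃₂}) > α` and
`P(Z₁ > min{z_{1-α+γ}, Z̃₂ + z_{1-γ}}) < α`. -/
theorem stmt2 (α γ ω : ℝ) (hα : α ∈ Set.Ioo (0 : ℝ) (1 / 2)) (hγ : γ ∈ Set.Ioo 0 α)
    (hω : ω ∈ Set.Ioo (0 : ℝ) 1)
    (zαγ zγ : ℝ)
    (hzαγ : stdNormal (Set.Iic zαγ) = ENNReal.ofReal (1 - α + γ))
    (hzγ : stdNormal (Set.Iic zγ) = ENNReal.ofReal (1 - γ)) :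
    ENNReal.ofReal α < stdNormal2 {p : ℝ × ℝ | min zαγ (Ztilde2 ω p) < p.1} ∧
    stdNormal2 {p : ℝ × ℝ | min zαγ (Ztilde2 ω p + zγ) < p.1} < ENNReal.ofReal α := by
  obtain ⟨hα0, hα2⟩ := hα
  obtain ⟨hγ0, hγα⟩ := hγ
  obtain ⟨hω0, hω1⟩ := hω
  set c : ℝ := Real.sqrt (1 - ω) with hc_def
  set d : ℝ := Real.sqrt ω with hd_def
  have hc : 0 < c := Real.sqrt_pos.mpr (by linarith)
  have hd : 0 < d := Real.sqrt_pos.mpr hω0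
  have hc2 : c ^ 2 = 1 - ω := Real.sq_sqrt (by linarith)
  have hd2 : d ^ 2 = ω := Real.sq_sqrt hω0.le
  have hc1 : c < 1 := by nlinarith
  have hab : c ^ 2 + (-d) ^ 2 = 1 := by rw [neg_sq, hc2, hd2]; ring
  have hs : Real.sqrt (ω - ω ^ 2) = d * c := by
    rw [hd_def, hc_def, ← Real.sqrt_mul hω0.le]
    congr 1
    ring
  set L : ℝ × ℝ → ℝ := fun p => c * p.1 + (-d) * p.2 with hL_def
  have hLmeas : Measurable L := by
    apply Measurable.add
    · exact measurable_fst.const_mul c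
    · exact measurable_snd.const_mul (-d)
  have hmap : stdNormal2.map L = stdNormal := stdNormal2_map_lin c (-d) hab
  constructor
  · -- first inequality
    have hsub : L ⁻¹' (Set.Ioi 0) ⊆ {p : ℝ × ℝ | min zαγ (Ztilde2 ω p) < p.1} := by
      intro p hp
      simp only [Set.mem_preimage, Set.mem_Ioi] at hp
      simp only [Set.mem_setOf_eq, min_lt_iff]
      right
      have h1 : 0 < c * (c * p.1 + (-d) * p.2) := mul_pos hc hp
      have key : c * (c * p.1 + (-d) * p.2) = (1 - ω) * p.1 - d * c * p.2 := by
        rw [← hc2]; ring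
      rw [key] at h1
      unfold Ztilde2
      rw [hs]
      linarith
    have heq : stdNormal2 (L ⁻¹' (Set.Ioi 0)) = 1/2 := by
      rw [← Measure.map_apply hLmeas measurableSet_Ioi, hmap]
      exact stdNormal_Ioi_zero
    calc ENNReal.ofReal α < ENNReal.ofReal (1/2) := by
          rw [ENNReal.ofReal_lt_ofReal_iff (by norm_num)]; linarith
      _ = 1/2 := by
          rw [ENNReal.ofReal_div_of_pos (by norm_num)]; norm_num
      _ = stdNormal2 (L ⁻¹' (Set.Ioi 0)) := heq.symm
      _ ≤ _ := measure_mono hsub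
  · -- second inequality
    have hzγpos : 0 < zγ := by
      by_contra h
      push_neg at h
      have h1 : stdNormal (Set.Iic zγ) ≤ stdNormal (Set.Iic 0) :=
        measure_mono (Set.Iic_subset_Iic.mpr h)
      rw [hzγ, stdNormal_Iic_zero] at h1
      have h2 : (1/2 : ENNReal) = ENNReal.ofReal (1/2) := by
        rw [ENNReal.ofReal_div_of_pos (by norm_num)]; norm_num
      rw [h2, ENNReal.ofReal_le_ofReal_iff (by norm_num)] at h1
      linarith
    set t : ℝ := zγ / c with ht_def
    have ht : zγ < t := by
      rw [ht_def, lt_div_iff₀ hc]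
      nlinarith
    have hS2 : {p : ℝ × ℝ | Ztilde2 ω p + zγ < p.1} = L ⁻¹' (Set.Ioi t) := by
      ext p
      simp only [Set.mem_setOf_eq, Set.mem_preimage, Set.mem_Ioi, ht_def, div_lt_iff₀ hc]
      unfold Ztilde2
      rw [hs]
      have key : L p * c = (1 - ω) * p.1 - d * c * p.2 := by
        simp only [hL_def]
        rw [← hc2]; ring
      rw [key]
      constructor <;> intro h <;> linarith
    have hsub : {p : ℝ × ℝ | min zαγ (Ztilde2 ω p + zγ) < p.1} ⊆
        (Set.Ioi zαγ ×ˢ Set.univ) ∪ L ⁻¹' (Set.Ioi t) := by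
      intro p hp
      simp only [Set.mem_setOf_eq, min_lt_iff] at hp
      rcases hp with h | h
      · exact Or.inl (by simp [Set.mem_prod]; exact h)
      · exact Or.inr (by rw [← hS2]; exact h)
    have hμ1 : stdNormal2 (Set.Ioi zαγ ×ˢ Set.univ) = ENNReal.ofReal (α - γ) := by
      rw [stdNormal2, Measure.prod_prod, measure_univ, mul_one]
      have := stdNormal_Ioi_eq (r := 1 - α + γ) (by linarith) (by linarith) hzαγ
      rw [this]
      congr 1
      ring
    have hμ2 : stdNormal2 (L ⁻¹' (Set.Ioi t)) < ENNReal.ofReal γ := by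
      rw [← Measure.map_apply hLmeas measurableSet_Ioi, hmap]
      have hγeq : stdNormal (Set.Ioi zγ) = ENNReal.ofReal γ := by
        have := stdNormal_Ioi_eq (r := 1 - γ) (by linarith) (by linarith) hzγ
        rw [this]
        congr 1
        ring
      have hdecomp : stdNormal (Set.Ioi zγ) = stdNormal (Set.Ioc zγ t) + stdNormal (Set.Ioi t) := by
        rw [← measure_union (Set.Ioc_disjoint_Ioi le_rfl) measurableSet_Ioi,
          Set.Ioc_union_Ioi_eq_Ioi ht.le]
      rw [← hγeq, hdecomp]
      rw [add_comm]
      exact ENNReal.lt_add_right (measure_ne_top _ _) (ne_of_gt (stdNormal_Ioc_pos ht))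
    calc stdNormal2 {p : ℝ × ℝ | min zαγ (Ztilde2 ω p + zγ) < p.1}
        ≤ stdNormal2 ((Set.Ioi zαγ ×ˢ Set.univ) ∪ L ⁻¹' (Set.Ioi t)) := measure_mono hsub
      _ ≤ stdNormal2 (Set.Ioi zαγ ×ˢ Set.univ) + stdNormal2 (L ⁻¹' (Set.Ioi t)) :=
          measure_union_le _ _
      _ < ENNReal.ofReal (α - γ) + ENNReal.ofReal γ := by
          rw [hμ1]
          exact ENNReal.add_lt_add_left ENNReal.ofReal_ne_top hμ2
      _ = ENNReal.ofReal α := by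
          rw [← ENNReal.ofReal_add (by linarith) hγ0.le]
          congr 1
          ring
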